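/- arXiv:2408.10136 — 3 statements merged into one kernel-verified Lean document; each statement's English description precedes it below -/
import Mathlib

section
/- Let (a,b,c,d) be obtained by uniformly sampling four distinct values without replacement from the set {i/(N+1) - 1/2 : i = 1,...,N} with N >= 4. Then E[abcd] = (3 N^2 (E[a^2])^2 - 6 N E[a^4]) / (N(N-1)(N-2)(N-3)). -/
open Finset

/-- The `i`-th element of the set `{i/(N+1) - 1/2 : i = 1, ..., N}` of shifted
normalized rank values. -/
noncomputable def shiftedRankVal (N : ℕ) (i : Fin N) : ℝ :=
  ((i : ℕ) + 1) / (N + 1) - 1 / 2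

/-- If `(a,b,c,d)` is a uniformly random sequence of four distinct elements of
`{i/(N+1) - 1/2 : i = 1,...,N}` with `N ≥ 4`, then
`E[abcd] = (3N²(E[a²])² - 6N E[a⁴]) / (N(N-1)(N-2)(N-3))`. -/
theorem stmt_10 (N : ℕ) (hN : 4 ≤ N) :
    (∑ i : Fin N, ∑ j ∈ univ.erase i, ∑ k ∈ (univ.erase i).erase j,
        ∑ l ∈ ((univ.erase i).erase j).erase k,
          shiftedRankVal N i * shiftedRankVal N j * shiftedRankVal N k * shiftedRankVal N l)
        / ((N : ℝ) * ((N : ℝ) - 1) * ((N : ℝ) - 2) * ((N : ℝ) - 3))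
      = (3 * (N : ℝ) ^ 2 * ((∑ i : Fin N, shiftedRankVal N i ^ 2) / N) ^ 2
          - 6 * (N : ℝ) * ((∑ i : Fin N, shiftedRankVal N i ^ 4) / N))
        / ((N : ℝ) * ((N : ℝ) - 1) * ((N : ℝ) - 2) * ((N : ℝ) - 3)) := by
  set x : Fin N → ℝ := shiftedRankVal N with hx
  have hN1 : ((N : ℝ) + 1) ≠ 0 := by positivity
  have hgauss : ∀ n : ℕ, ∑ i ∈ Finset.range n, ((i : ℝ) + 1) = n * (n + 1) / 2 := by
    intro n
    induction n with
    | zero => simp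
    | succ m ih => rw [Finset.sum_range_succ, ih]; push_cast; ring
  have hS1 : ∑ i : Fin N, x i = 0 := by
    simp only [hx, shiftedRankVal]
    rw [Finset.sum_sub_distrib, ← Finset.sum_div]
    rw [Fin.sum_univ_eq_sum_range (fun i => ((i : ℝ) + 1)) N, hgauss N]
    simp only [Finset.sum_const, Finset.card_univ, Fintype.card_fin, nsmul_eq_mul]
    field_simp
    ring
  set S2 := ∑ i : Fin N, x i ^ 2 with hS2
  set S3 := ∑ i : Fin N, x i ^ 3 with hS3
  set S4 := ∑ i : Fin N, x i ^ 4 with hS4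
  have E0 : ∀ (f : Fin N → ℝ) (i : Fin N),
      ∑ j ∈ univ.erase i, f j = (∑ j : Fin N, f j) - f i :=
    fun f i => Finset.sum_erase_eq_sub (mem_univ i)
  have E1 : ∀ (f : Fin N → ℝ) (i j : Fin N), j ≠ i →
      ∑ k ∈ (univ.erase i).erase j, f k = (∑ k : Fin N, f k) - f i - f j := by
    intro f i j hji
    rw [Finset.sum_erase_eq_sub (Finset.mem_erase.mpr ⟨hji, mem_univ j⟩),
      Finset.sum_erase_eq_sub (mem_univ i)]
  have E2 : ∀ (f : Fin N → ℝ) (i j k : Fin N), k ∈ (univ.erase i).erase j → j ≠ i →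
      ∑ l ∈ ((univ.erase i).erase j).erase k, f l
        = (∑ l : Fin N, f l) - f i - f j - f k := by
    intro f i j k hk hji
    rw [Finset.sum_erase_eq_sub hk,
      Finset.sum_erase_eq_sub (Finset.mem_erase.mpr ⟨hji, mem_univ j⟩),
      Finset.sum_erase_eq_sub (mem_univ i)]
  have main : (∑ i : Fin N, ∑ j ∈ univ.erase i, ∑ k ∈ (univ.erase i).erase j,
        ∑ l ∈ ((univ.erase i).erase j).erase k, x i * x j * x k * x l)
      = 3 * S2 ^ 2 - 6 * S4 := by
    have hA : ∀ i : Fin N,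
        (∑ j ∈ univ.erase i, ∑ k ∈ (univ.erase i).erase j,
          ∑ l ∈ ((univ.erase i).erase j).erase k, x i * x j * x k * x l)
        = -6 * x i ^ 4 + 3 * S2 * x i ^ 2 + 2 * S3 * x i := by
      intro i
      have hB : ∀ j ∈ univ.erase i,
          (∑ k ∈ (univ.erase i).erase j,
            ∑ l ∈ ((univ.erase i).erase j).erase k, x i * x j * x k * x l)
          = 2 * x i ^ 3 * x j + 2 * x i * x j ^ 3 + 2 * x i ^ 2 * x j ^ 2
            - S2 * (x i * x j) := by
        intro j hj
        have hji : j ≠ i := (Finset.mem_erase.mp hj).1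
        have hC : ∀ k ∈ (univ.erase i).erase j,
            (∑ l ∈ ((univ.erase i).erase j).erase k, x i * x j * x k * x l)
            = (-(x i * x j) * (x i + x j)) * x k + (-(x i * x j)) * x k ^ 2 := by
          intro k hk
          rw [← Finset.mul_sum, E2 x i j k hk hji, hS1]
          ring
        rw [Finset.sum_congr rfl hC, Finset.sum_add_distrib, ← Finset.mul_sum,
          ← Finset.mul_sum, E1 x i j hji, E1 (fun t => x t ^ 2) i j hji, hS1]
        simp only [← hS2]
        ring
      rw [Finset.sum_congr rfl hB]
      have hB' : ∀ j ∈ univ.erase i,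
          2 * x i ^ 3 * x j + 2 * x i * x j ^ 3 + 2 * x i ^ 2 * x j ^ 2
            - S2 * (x i * x j)
          = (2 * x i ^ 3 - S2 * x i) * x j + (2 * x i ^ 2) * x j ^ 2
            + (2 * x i) * x j ^ 3 := by
        intro j _; ring
      rw [Finset.sum_congr rfl hB', Finset.sum_add_distrib, Finset.sum_add_distrib,
        ← Finset.mul_sum, ← Finset.mul_sum, ← Finset.mul_sum, E0 x i,
        E0 (fun t => x t ^ 2) i, E0 (fun t => x t ^ 3) i, hS1]
      simp only [← hS2, ← hS3]
      ring
    rw [Finset.sum_congr rfl (fun i _ => hA i), Finset.sum_add_distrib,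
      Finset.sum_add_distrib, ← Finset.mul_sum, ← Finset.mul_sum, ← Finset.mul_sum,
      hS1, ← hS2, ← hS4]
    ring
  have hNne : (N : ℝ) ≠ 0 := by
    have : (0 : ℝ) < N := by exact_mod_cast Nat.pos_of_ne_zero (by omega)
    exact ne_of_gt this
  congr 1
  rw [main]
  field_simp
end

section
/- Let Theta be an n x K matrix whose rows are standard basis vectors of R^K (a membership matrix) with each of the K columns containing at least one 1, and let B be a K x K real symmetric invertible matrix. Let U D U^T be an eigendecomposition of Theta B Theta^T restricted to its nonzero eigenvalues, with U n x K having orthonormal columns. Then U = Theta T for some K x K matrix T, and for all k != l, the rows of T satisfy ||T_k - T_l||_2 = sqrt(1/n_k + 1/n_l), where n_k is the number of rows of Theta with membership k. -/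
open Matrix Finset
open scoped Classical

/-- Eigen-structure of block matrices: if `Θ` is a membership matrix with every block
nonempty, `B` is a `K × K` symmetric invertible matrix, and `Θ B Θᵀ = U D Uᵀ` with `U`
having orthonormal columns and `D` diagonal with nonzero diagonal entries (the
eigendecomposition restricted to the nonzero eigenvalues), then `U = Θ T` for some
`K × K` matrix `T` whose rows satisfy `‖T_k - T_l‖₂ = sqrt(1/n_k + 1/n_l)` for `k ≠ l`. -/
theorem stmt_15 {n K : ℕ} (g : Fin n → Fin K) (hsurj : Function.Surjective g)
    (B : Matrix (Fin K) (Fin K) ℝ) (hBsymm : B.IsSymm) (hBinv : IsUnit B)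
    (U : Matrix (Fin n) (Fin K) ℝ) (D : Matrix (Fin K) (Fin K) ℝ)
    (hD : D.IsDiag) (hDnz : ∀ k, D k k ≠ 0)
    (hU : Uᵀ * U = 1)
    (Θ : Matrix (Fin n) (Fin K) ℝ)
    (hΘ : Θ = Matrix.of fun i k => if g i = k then 1 else 0)
    (hdec : Θ * B * Θᵀ = U * D * Uᵀ) :
    ∃ T : Matrix (Fin K) (Fin K) ℝ, U = Θ * T ∧
      ∀ k l, k ≠ l →
        Real.sqrt (∑ m, (T k m - T l m) ^ 2)
          = Real.sqrt (1 / ((Finset.univ.filter fun i => g i = k).card : ℝ)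
              + 1 / ((Finset.univ.filter fun i => g i = l).card : ℝ)) := by
  classical
  set c : Fin K → ℝ := fun k => ((Finset.univ.filter fun i => g i = k).card : ℝ) with hc
  have hcpos : ∀ k, 0 < c k := by
    intro k
    have : ((Finset.univ.filter fun i => g i = k)).Nonempty := by
      obtain ⟨i, hi⟩ := hsurj k
      exact ⟨i, by simp [hi]⟩
    simpa [hc] using Finset.card_pos.mpr this
  have hDd : D = Matrix.diagonal fun k => D k k := hD.diagonal_diag.symm
  have hDu : IsUnit D := by
    rw [Matrix.isUnit_iff_isUnit_det, hDd, Matrix.det_diagonal]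
    exact (Finset.prod_ne_zero_iff.mpr fun k _ => hDnz k).isUnit
  have hDD : D * D⁻¹ = 1 := Matrix.mul_nonsing_inv D ((Matrix.isUnit_iff_isUnit_det D).mp hDu)
  set T : Matrix (Fin K) (Fin K) ℝ := B * Θᵀ * U * D⁻¹ with hT
  have hUT : U = Θ * T := by
    calc U = U * D * Uᵀ * U * D⁻¹ := by
          rw [Matrix.mul_assoc (U * D), hU, Matrix.mul_one, Matrix.mul_assoc, hDD, Matrix.mul_one]
      _ = Θ * B * Θᵀ * U * D⁻¹ := by rw [hdec]
      _ = Θ * (B * Θᵀ * U * D⁻¹) := by simp only [Matrix.mul_assoc]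
  clear_value T
  -- Θᵀ Θ = diagonal c
  have hN : Θᵀ * Θ = Matrix.diagonal c := by
    ext k l
    rw [Matrix.mul_apply]
    simp only [hΘ, Matrix.transpose_apply, Matrix.of_apply]
    rcases eq_or_ne k l with rfl | hkl
    · rw [Matrix.diagonal_apply_eq]
      have : ∀ x : Fin n, ((if g x = k then (1:ℝ) else 0) * (if g x = k then 1 else 0))
          = if g x = k then (1:ℝ) else 0 := fun x => by split_ifs <;> simp
      rw [Finset.sum_congr rfl fun x _ => this x]
      simp [hc, Finset.sum_boole]
    · rw [Matrix.diagonal_apply_ne _ hkl]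
      apply Finset.sum_eq_zero
      intro i _
      rcases eq_or_ne (g i) k with h | h
      · simp [h, hkl]
      · simp [h]
  -- Gram identities
  have h1 : Tᵀ * (Matrix.diagonal c * T) = 1 := by
    calc Tᵀ * (Matrix.diagonal c * T) = Tᵀ * (Θᵀ * Θ * T) := by rw [hN]
      _ = (Θ * T)ᵀ * (Θ * T) := by rw [Matrix.transpose_mul]; simp only [Matrix.mul_assoc]
      _ = Uᵀ * U := by rw [← hUT]
      _ = 1 := hU
  have h2 : (Matrix.diagonal c * T) * Tᵀ = 1 := mul_eq_one_comm.mp h1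
  have key : ∀ k l, c k * ∑ m, T k m * T l m = (1 : Matrix (Fin K) (Fin K) ℝ) k l := by
    intro k l
    rw [← h2, Matrix.mul_apply, Finset.mul_sum]
    apply Finset.sum_congr rfl
    intro m _
    rw [Matrix.diagonal_mul, Matrix.transpose_apply]
    ring
  have hdiagT : ∀ k, ∑ m, T k m * T k m = 1 / c k := by
    intro k
    have := key k k
    rw [Matrix.one_apply_eq] at this
    rw [eq_div_iff (hcpos k).ne']
    linear_combination this
  have hoffT : ∀ k l, k ≠ l → ∑ m, T k m * T l m = 0 := by
    intro k l hkl
    have := key k l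
    rw [Matrix.one_apply_ne hkl] at this
    exact (mul_eq_zero.mp this).resolve_left (hcpos k).ne'
  refine ⟨T, hUT, ?_⟩
  intro k l hkl
  congr 1
  have expand : ∑ m, (T k m - T l m) ^ 2
      = (∑ m, T k m * T k m) - 2 * (∑ m, T k m * T l m) + ∑ m, T l m * T l m := by
    have h3 : ∀ m : Fin K, (T k m - T l m) ^ 2
        = T k m * T k m - 2 * (T k m * T l m) + T l m * T l m := fun m => by ring
    rw [Finset.sum_congr rfl fun m _ => h3 m, Finset.sum_add_distrib,
      Finset.sum_sub_distrib, ← Finset.mul_sum]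
  rw [expand, hdiagT, hdiagT, hoffT k l hkl]
  ring
end

section
/- Let Theta be an n x K membership matrix of rank K with block sizes n_1,...,n_K, and let B~ be a K x K symmetric invertible matrix. Then the smallest nonzero singular value gamma of Theta B~ Theta^T satisfies gamma >= n_min * |lambda_K(B~)|, where n_min = min_k n_k and |lambda_K(B~)| is the smallest eigenvalue magnitude of B~. -/
open Matrix Finset
open scoped Classical RealInnerProductSpace

noncomputable def toE {K : ℕ} (x : Fin K → ℝ) : EuclideanSpace ℝ (Fin K) :=
  (WithLp.equiv 2 (Fin K → ℝ)).symm x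

lemma toE_inner {K : ℕ} (x y : Fin K → ℝ) : ⟪toE x, toE y⟫ = ∑ i, x i * y i := by
  simp [toE, PiLp.inner_apply, RCLike.inner_apply]
  exact Finset.sum_congr rfl fun i _ => mul_comm _ _

lemma specLB {K : ℕ} {B : Matrix (Fin K) (Fin K) ℝ} (hB : B.IsHermitian) {β : ℝ} (hβ0 : 0 ≤ β)
    (hβl : ∀ i, β ≤ |hB.eigenvalues i|) (u : Fin K → ℝ) :
    β * ‖toE u‖ ≤ ‖toE (B.mulVec u)‖ := by
  have hs : ∀ i j, B i j = B j i := fun i j => by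
    conv_lhs => rw [← hB.eq]
    simp [conjTranspose_apply]
  have hsym : ∀ x y : Fin K → ℝ, ⟪toE (B.mulVec x), toE y⟫ = ⟪toE x, toE (B.mulVec y)⟫ := by
    intro x y
    simp only [toE_inner, Matrix.mulVec, dotProduct, Finset.sum_mul, Finset.mul_sum]
    rw [Finset.sum_comm]
    apply Finset.sum_congr rfl; intro i _; apply Finset.sum_congr rfl; intro j _
    rw [hs j i]; ring
  set b := hB.eigenvectorBasis with hb
  have hbE : ∀ i, toE ⇑(b i) = b i := fun i => rfl
  have key : ∀ i, ⟪b i, toE (B.mulVec u)⟫ = hB.eigenvalues i * ⟪b i, toE u⟫ := by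
    intro i
    rw [← hbE i, ← hsym, hB.mulVec_eigenvectorBasis i]
    have : toE (hB.eigenvalues i • ⇑(b i)) = hB.eigenvalues i • b i := rfl
    rw [this, real_inner_smul_left, hbE]
  have P : ∀ x : EuclideanSpace ℝ (Fin K), ‖x‖ ^ 2 = ∑ i, ⟪b i, x⟫ ^ 2 := by
    intro x
    rw [← real_inner_self_eq_norm_sq, ← b.sum_inner_mul_inner x x]
    apply Finset.sum_congr rfl; intro i _
    rw [real_inner_comm x (b i)]; ring
  have hsq : (β * ‖toE u‖) ^ 2 ≤ ‖toE (B.mulVec u)‖ ^ 2 := by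
    rw [mul_pow, P (toE u), P (toE (B.mulVec u)), Finset.mul_sum]
    apply Finset.sum_le_sum
    intro i _
    rw [key i, mul_pow]
    have h2 : β ^ 2 ≤ hB.eigenvalues i ^ 2 := by
      have := hβl i
      nlinarith [sq_abs (hB.eigenvalues i)]
    nlinarith [sq_nonneg (⟪b i, toE u⟫ : ℝ)]
  have h3 := Real.sqrt_le_sqrt hsq
  rwa [Real.sqrt_sq (by positivity), Real.sqrt_sq (norm_nonneg _)] at h3

lemma toE_norm_ge {K : ℕ} (c : ℝ) (hc : 0 ≤ c) (d x : Fin K → ℝ)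
    (hd : ∀ k, c ≤ |d k|) : c * ‖toE x‖ ≤ ‖toE (fun k => d k * x k)‖ := by
  have hsq : (c * ‖toE x‖) ^ 2 ≤ ‖toE (fun k => d k * x k)‖ ^ 2 := by
    rw [mul_pow, ← real_inner_self_eq_norm_sq, ← real_inner_self_eq_norm_sq,
      toE_inner, toE_inner, Finset.mul_sum]
    apply Finset.sum_le_sum
    intro k _
    have h1 := hd k
    have h2 : c ^ 2 ≤ d k ^ 2 := by nlinarith [sq_abs (d k)]
    nlinarith [mul_nonneg (sub_nonneg.mpr h2) (sq_nonneg (x k))]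
  have h3 := Real.sqrt_le_sqrt hsq
  rwa [Real.sqrt_sq (by positivity), Real.sqrt_sq (norm_nonneg _)] at h3

/-- Let `Θ` be an `n × K` membership matrix of rank `K` (membership map `g` surjective)
and `B~` a `K × K` symmetric invertible matrix.  If `β` is the smallest eigenvalue
magnitude of `B~` (formalized: `β` is a lower bound on `|μ|` over all eigenvalues `μ` of
`B~`) and `n_min` is a lower bound on all block sizes, then every nonzero singular value
of the symmetric matrix `Θ B~ Θᵀ` (equivalently, the magnitude `|μ|` of any nonzero
eigenvalue `μ`) is at least `n_min · β`; in particular the smallest nonzero singular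
value `γ` satisfies `γ ≥ n_min · |λ_K(B~)|`. -/
theorem stmt_16 {n K : ℕ} (g : Fin n → Fin K) (hsurj : Function.Surjective g)
    (Btil : Matrix (Fin K) (Fin K) ℝ) (hBsymm : Btil.IsSymm) (hBinv : IsUnit Btil)
    (β : ℝ)
    (hβ : ∀ (μ : ℝ) (v : Fin K → ℝ), v ≠ 0 → Btil.mulVec v = μ • v → β ≤ |μ|)
    (nmin : ℕ)
    (hnmin : ∀ k, nmin ≤ (Finset.univ.filter fun i => g i = k).card)
    (Θ : Matrix (Fin n) (Fin K) ℝ)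
    (hΘ : Θ = Matrix.of fun i k => if g i = k then 1 else 0) :
    ∀ (μ : ℝ) (v : Fin n → ℝ), μ ≠ 0 → v ≠ 0 →
      (Θ * Btil * Θᵀ).mulVec v = μ • v → (nmin : ℝ) * β ≤ |μ| := by
  intro μ v hμ hv hev
  rcases le_or_gt β 0 with hβ0 | hβ0
  · calc (nmin : ℝ) * β ≤ 0 := mul_nonpos_of_nonneg_of_nonpos (Nat.cast_nonneg _) hβ0
    _ ≤ |μ| := abs_nonneg _
  -- Θ acts by composition with g
  have hΘv : ∀ (x : Fin K → ℝ) (i : Fin n), Θ.mulVec x i = x (g i) := by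
    intro x i
    simp [hΘ, Matrix.mulVec, dotProduct, ite_mul]
  have hinj : ∀ x : Fin K → ℝ, Θ.mulVec x = 0 → x = 0 := by
    intro x hx
    funext k
    obtain ⟨i, hi⟩ := hsurj k
    have := congrFun hx i
    rw [hΘv] at this
    rw [hi] at this
    simpa using this
  -- pull back the eigenvector
  set w : Fin K → ℝ := μ⁻¹ • (Btil.mulVec (Θᵀ.mulVec v)) with hwdef
  have hvw : Θ.mulVec w = v := by
    rw [hwdef, Matrix.mulVec_smul, Matrix.mulVec_mulVec, Matrix.mulVec_mulVec, hev,
      smul_smul, inv_mul_cancel₀ hμ, one_smul]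
  have hw0 : w ≠ 0 := by
    intro h
    apply hv
    rw [← hvw, h]
    simp
  -- Btil * (Θᵀ Θ) w = μ w
  have hBDw : Btil.mulVec (Θᵀ.mulVec (Θ.mulVec w)) = μ • w := by
    have h1 : Θ.mulVec (Btil.mulVec (Θᵀ.mulVec (Θ.mulVec w))) = Θ.mulVec (μ • w) := by
      rw [hvw, Matrix.mulVec_mulVec, Matrix.mulVec_mulVec, hev, Matrix.mulVec_smul, hvw]
    have h2 := hinj _ (by rw [Matrix.mulVec_sub, h1, sub_self] :
      Θ.mulVec (Btil.mulVec (Θᵀ.mulVec (Θ.mulVec w)) - μ • w) = 0)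
    exact sub_eq_zero.mp h2
  -- diagonal structure
  set d : Fin K → ℝ := fun k => ((Finset.univ.filter fun i => g i = k).card : ℝ) with hddef
  have hu : Θᵀ.mulVec (Θ.mulVec w) = fun k => d k * w k := by
    funext k
    simp only [Matrix.mulVec, dotProduct, Matrix.transpose_apply]
    have : ∀ i, Θ i k * (∑ j, Θ i j * w j) = if g i = k then w k else 0 := by
      intro i
      have h3 : (∑ j, Θ i j * w j) = w (g i) := hΘv w i
      rw [h3, hΘ]
      by_cases h : g i = k <;> simp [h]
    rw [Finset.sum_congr rfl fun i _ => this i, Finset.sum_ite, Finset.sum_const,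
      Finset.sum_const_zero, add_zero]
    show _ • w k = ((Finset.univ.filter fun i => g i = k).card : ℝ) * w k
    rw [nsmul_eq_mul]
  -- spectral bound
  have hB : Btil.IsHermitian := by
    rw [Matrix.IsHermitian, conjTranspose]
    ext i j
    simpa using congrFun (congrFun hBsymm.eq i) j
  have hβl : ∀ i, β ≤ |hB.eigenvalues i| := by
    intro i
    apply hβ _ ⇑(hB.eigenvectorBasis i)
    · intro h0
      exact hB.eigenvectorBasis.orthonormal.ne_zero i (by ext j; exact congrFun h0 j)
    · exact hB.mulVec_eigenvectorBasis i
  have hd : ∀ k, (nmin : ℝ) ≤ |d k| := by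
    intro k
    have h : |d k| = (((Finset.univ.filter fun i => g i = k).card : ℕ) : ℝ) :=
      abs_of_nonneg (Nat.cast_nonneg _)
    rw [h]
    exact_mod_cast hnmin k
  set u : Fin K → ℝ := fun k => d k * w k with hudef
  have hBu : Btil.mulVec u = μ • w := by rw [← hu]; exact hBDw
  have h4 : β * ‖toE u‖ ≤ ‖toE (Btil.mulVec u)‖ := specLB hB hβ0.le hβl u
  have h5 : (nmin : ℝ) * ‖toE w‖ ≤ ‖toE u‖ := toE_norm_ge _ (Nat.cast_nonneg _) d w hd
  have h6 : ‖toE (Btil.mulVec u)‖ = |μ| * ‖toE w‖ := by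
    rw [hBu]
    have : toE (μ • w) = μ • toE w := rfl
    rw [this, norm_smul, Real.norm_eq_abs]
  have hwpos : 0 < ‖toE w‖ := by
    rw [norm_pos_iff]
    intro h
    apply hw0
    funext k
    exact congrFun (congrArg (WithLp.equiv 2 (Fin K → ℝ)) h) k
  have chain : (nmin : ℝ) * β * ‖toE w‖ ≤ |μ| * ‖toE w‖ := by
    calc (nmin : ℝ) * β * ‖toE w‖ = β * ((nmin : ℝ) * ‖toE w‖) := by ring
    _ ≤ β * ‖toE u‖ := by apply mul_le_mul_of_nonneg_left h5 hβ0.le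
    _ ≤ ‖toE (Btil.mulVec u)‖ := h4
    _ = |μ| * ‖toE w‖ := h6
  exact le_of_mul_le_mul_right chain hwpos
end
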